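/- Let (X, 𝔐, μ) be a probability space and σ : [0,∞) × X → X a jointly measurable map such that for each t ≥ 0 the map σ_t = σ(t,·) satisfies σ_t⁻¹E ∈ 𝔐 and μ(σ_t⁻¹E) = μ(E) for every E ∈ 𝔐. Let F : X → [0,∞] be measurable and let C ≥ 0 and a ≥ 0 be constants such that for μ-almost every x ∈ X and every T > 0 one has ∫_0^T F(σ(t,x)) dt ≤ C·T + a (Lebesgue integral in [0,∞]). Then ∫_X F dμ ≤ C. -/

import Mathlib

open MeasureTheory Filter Topology
open scoped NNReal ENNReal

/-- If `σ` is a jointly measurable family of `μ`-preserving maps on a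
probability space and `F : X → [0,∞]` is measurable with
`∫_0^T F(σ(t,x)) dt ≤ C·T + a` for a.e. `x` and all `T > 0`, then
`∫ F dμ ≤ C`. -/
theorem lintegral_le_of_timeAverage_bound
    {X : Type*} [MeasurableSpace X] (μ : Measure X) [IsProbabilityMeasure μ]
    (σ : ℝ≥0 → X → X)
    (hjoint : Measurable fun p : ℝ≥0 × X => σ p.1 p.2)
    (hpre : ∀ (t : ℝ≥0) (E : Set X), MeasurableSet E → MeasurableSet (σ t ⁻¹' E))
    (hinv : ∀ (t : ℝ≥0) (E : Set X), MeasurableSet E → μ (σ t ⁻¹' E) = μ E)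
    (F : X → ℝ≥0∞) (hF : Measurable F)
    (C a : ℝ≥0)
    (hbound : ∀ᵐ x ∂μ, ∀ T : ℝ, 0 < T →
      ∫⁻ t in Set.Ioc (0 : ℝ) T, F (σ t.toNNReal x) ≤ C * ENNReal.ofReal T + a) :
    ∫⁻ x, F x ∂μ ≤ C := by
  set I := ∫⁻ x, F x ∂μ with hI
  -- each σ t is measure preserving
  have hmeas : ∀ t : ℝ≥0, Measurable (σ t) := fun t E hE => hpre t E hE
  have hmp : ∀ t : ℝ≥0, MeasurePreserving (σ t) μ μ := by
    intro t
    refine ⟨hmeas t, ?_⟩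
    ext E hE
    rw [Measure.map_apply (hmeas t) hE, hinv t E hE]
  have hconst : ∀ t : ℝ≥0, ∫⁻ x, F (σ t x) ∂μ = I := by
    intro t
    exact (hmp t).lintegral_comp hF
  -- key inequality for each T > 0
  have key : ∀ T : ℝ, 0 < T → ENNReal.ofReal T * I ≤ C * ENNReal.ofReal T + a := by
    intro T hT
    have hTn : volume (Set.Ioc (0:ℝ) T) = ENNReal.ofReal T := by
      rw [Real.volume_Ioc, sub_zero]
    have hjm : Measurable (Function.uncurry fun (t : ℝ) (x : X) => F (σ t.toNNReal x)) := by
      apply hF.comp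
      exact hjoint.comp ((measurable_real_toNNReal.comp measurable_fst).prodMk measurable_snd)
    calc ENNReal.ofReal T * I
        = ∫⁻ t in Set.Ioc (0:ℝ) T, I := by rw [setLIntegral_const, hTn, mul_comm]
      _ = ∫⁻ t in Set.Ioc (0:ℝ) T, (∫⁻ x, F (σ t.toNNReal x) ∂μ) := by
          refine setLIntegral_congr_fun measurableSet_Ioc (fun t ht => ?_)
          rw [hconst]
      _ = ∫⁻ x, (∫⁻ t in Set.Ioc (0:ℝ) T, F (σ t.toNNReal x)) ∂μ := by
          exact lintegral_lintegral_swap hjm.aemeasurable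
      _ ≤ ∫⁻ x, (C * ENNReal.ofReal T + a : ℝ≥0∞) ∂μ := by
          refine lintegral_mono_ae ?_
          filter_upwards [hbound] with x hx
          exact hx T hT
      _ = C * ENNReal.ofReal T + a := by rw [lintegral_const, measure_univ, mul_one]
  -- conclude I ≤ C
  refine ENNReal.le_of_forall_pos_le_add fun ε hε _ => ?_
  set T : ℝ := ((a / ε : ℝ≥0) : ℝ) + 1 with hTdef
  have hT : 0 < T := by positivity
  have hTne : ENNReal.ofReal T ≠ 0 := (ENNReal.ofReal_pos.mpr hT).ne'
  have hTtop : ENNReal.ofReal T ≠ ∞ := ENNReal.ofReal_ne_top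
  have h1 : I ≤ C + a / ENNReal.ofReal T := by
    have := key T hT
    rw [mul_comm] at this
    rw [← ENNReal.le_div_iff_mul_le (Or.inl hTne) (Or.inl hTtop)] at this
    calc I ≤ (C * ENNReal.ofReal T + a) / ENNReal.ofReal T := this
      _ = C + a / ENNReal.ofReal T := by
          rw [ENNReal.add_div, mul_div_assoc, ENNReal.div_self hTne hTtop, mul_one]
  refine h1.trans (add_le_add_right ?_ _)
  rw [ENNReal.div_le_iff_le_mul (Or.inl hTne) (Or.inl ENNReal.coe_ne_top)]
  have : ENNReal.ofReal T = ((a / ε : ℝ≥0) : ℝ≥0∞) + 1 := by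
    rw [hTdef, ENNReal.ofReal_add (NNReal.coe_nonneg _) zero_le_one,
      ENNReal.ofReal_coe_nnreal, ENNReal.ofReal_one]
  rw [this, mul_add, mul_one]
  have : (ε : ℝ≥0∞) * ((a / ε : ℝ≥0) : ℝ≥0∞) = a := by
    rw [← ENNReal.coe_mul]
    norm_cast
    rw [mul_comm]; exact div_mul_cancel₀ a hε.ne'
  rw [this]
  exact le_add_right le_rfl
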